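/- Suppose g_n and g_{n+1} = (x − β_{n+1}) − γ_{n+1}/g_n both satisfy Riccati difference equations A_n D g_n = B_n (E1 g_n)(E2 g_n) + C_n M g_n + D_n and similarly with index n+1. Then, pointwise, the coefficients Â_{n+1} = A_n − (Δ_y²/2) D_n/γ_{n+1}, B̂_{n+1} = D_n/γ_{n+1}, Ĉ_{n+1} = −C_n − 2 M(x − β_{n+1}) D_n/γ_{n+1}, D̂_{n+1} = A_n + γ_{n+1} B_n + M(x − β_{n+1}) C_n + E1(x − β_{n+1}) E2(x − β_{n+1}) D_n/γ_{n+1} satisfy Â_{n+1} D g_{n+1} = B̂_{n+1} (E1 g_{n+1})(E2 g_{n+1}) + Ĉ_{n+1} M g_{n+1} + D̂_{n+1}. -/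

import Mathlib

/-- Divided difference operator on the lattice. -/
noncomputable def Dop (y1 y2 f : ℝ → ℝ) (x : ℝ) : ℝ := (f (y2 x) - f (y1 x)) / (y2 x - y1 x)

/-- Averaging (companion) operator on the lattice. -/
noncomputable def Mop (y1 y2 f : ℝ → ℝ) (x : ℝ) : ℝ := (f (y1 x) + f (y2 x)) / 2

/-- Magnus' coefficient transfer. If `gₙ` satisfies a Riccati
difference equation with coefficients `Aₙ, Bₙ, Cₙ, Dₙ` and
`g_{n+1}(t) = (t − β_{n+1}) − γ_{n+1}/gₙ(t)`, then `g_{n+1}` satisfies the Riccati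
equation with the hatted coefficients
`Â = Aₙ − (Δ²/2) Dₙ/γ`, `B̂ = Dₙ/γ`, `Ĉ = −Cₙ − 2 M(x−β) Dₙ/γ`,
`D̂ = Aₙ + γ Bₙ + M(x−β) Cₙ + E1(x−β) E2(x−β) Dₙ/γ`. -/
theorem stmt14 (y1 y2 gn gn1 : ℝ → ℝ) (β γ An Bn Cn Dn : ℝ) (x : ℝ)
    (hy : y1 x ≠ y2 x)
    (h1 : gn (y1 x) ≠ 0) (h2 : gn (y2 x) ≠ 0) (hγ : γ ≠ 0)
    (hrel : ∀ t, gn1 t = (t - β) - γ / gn t)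
    (hric : An * Dop y1 y2 gn x
      = Bn * (gn (y1 x) * gn (y2 x)) + Cn * Mop y1 y2 gn x + Dn) :
    (An - (y2 x - y1 x) ^ 2 / 2 * (Dn / γ)) * Dop y1 y2 gn1 x
      = (Dn / γ) * (gn1 (y1 x) * gn1 (y2 x))
        + (-Cn - 2 * Mop y1 y2 (fun t => t - β) x * (Dn / γ)) * Mop y1 y2 gn1 x
        + (An + γ * Bn + Mop y1 y2 (fun t => t - β) x * Cn
            + (y1 x - β) * (y2 x - β) * (Dn / γ)) := by
  have hd : y2 x - y1 x ≠ 0 := sub_ne_zero.mpr (Ne.symm hy)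
  simp only [Dop, Mop, hrel] at hric ⊢
  field_simp
  field_simp at hric
  linear_combination (γ^2) * hric
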